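/- Let G be a finite group and A a nontrivial normal subgroup of G with A > M(A)[A,G]. Then A is narrow in G (has a unique maximal proper G-invariant subgroup) if and only if the index |A : M(A)[A,G]| is prime and every chief factor of G of the form A/C is central. Moreover, in that case M_G(A) = M(A)[A,G]. -/

import Mathlib

/-- `B` is a `G`-invariant subgroup of `A`: a subgroup of `A` normalized by all of `G`. -/
def IsGInv (G : Type*) [Group G] (A B : Subgroup G) : Prop :=
  B ≤ A ∧ ∀ g : G, ∀ b ∈ B, g * b * g⁻¹ ∈ B

/-- `B` is a maximal proper `G`-invariant subgroup of `A`. -/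
def IsMaxGInv (G : Type*) [Group G] (A B : Subgroup G) : Prop :=
  IsGInv G A B ∧ B < A ∧ ∀ C : Subgroup G, IsGInv G A C → C < A → B ≤ C → B = C

/-- `M_G(A)`: the intersection of all maximal proper `G`-invariant subgroups of `A`. -/
def MG (G : Type*) [Group G] (A : Subgroup G) : Subgroup G :=
  sInf {B | IsMaxGInv G A B}

/-- `B` is a maximal proper normal subgroup of `A` (as subgroups of `G`). -/
def IsMaxNormalIn (G : Type*) [Group G] (A B : Subgroup G) : Prop :=
  (B ≤ A ∧ ∀ a ∈ A, ∀ b ∈ B, a * b * a⁻¹ ∈ B) ∧ B < A ∧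
    ∀ C : Subgroup G, (C ≤ A ∧ ∀ a ∈ A, ∀ c ∈ C, a * c * a⁻¹ ∈ C) → C < A → B ≤ C → B = C

/-- `M(A)`: the Mel'nikov subgroup (cosocle) of `A`, the intersection of all maximal
proper normal subgroups of `A`. -/
def Mel (G : Type*) [Group G] (A : Subgroup G) : Subgroup G :=
  sInf {B | IsMaxNormalIn G A B}

/-- `A` is narrow in `G`: it has a unique maximal proper `G`-invariant subgroup. -/
def Narrow (G : Type*) [Group G] (A : Subgroup G) : Prop :=
  ∃! B : Subgroup G, IsMaxGInv G A B

open scoped commutatorElement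



open Subgroup

universe u

/-- A maximal proper normal subgroup. -/
def MaxN {H : Type u} [Group H] (D : Subgroup H) : Prop :=
  D.Normal ∧ D ≠ ⊤ ∧ ∀ L : Subgroup H, L.Normal → D < L → L = ⊤

/-- The cosocle: intersection of all maximal proper normal subgroups. -/
def cosoc (H : Type u) [Group H] : Subgroup H := sInf {D | MaxN D}

lemma cosoc_le {H : Type u} [Group H] {D : Subgroup H} (hD : MaxN D) : cosoc H ≤ D :=
  sInf_le hD

lemma mem_of_coprime_pows {Q : Type u} [Group Q] (x : Q) {q r : ℕ} (h : Nat.Coprime q r)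
    (X : Subgroup Q) (hq : x ^ q ∈ X) (hr : x ^ r ∈ X) : x ∈ X := by
  have hb : ((Nat.gcd q r : ℕ) : ℤ) = q * Nat.gcdA q r + r * Nat.gcdB q r := Nat.gcd_eq_gcd_ab q r
  rw [h] at hb
  have hx : x = (x ^ q) ^ (Nat.gcdA q r) * (x ^ r) ^ (Nat.gcdB q r) := by
    rw [← zpow_natCast x q, ← zpow_natCast x r, ← zpow_mul, ← zpow_mul, ← zpow_add,
      ← hb]
    simp
  rw [hx]
  exact mul_mem (zpow_mem hq _) (zpow_mem hr _)

/-- In a finite cyclic `p`-group of order `> 1` with generator `g`, every proper subgroup is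
contained in `zpowers (g^p)`, which is proper. -/
lemma cyc_pgroup_proper_le {Q : Type u} [Group Q] [Finite Q] {g : Q}
    (hg : ∀ q : Q, q ∈ zpowers g) {p : ℕ} (hp : p.Prime) (hpg : IsPGroup p Q)
    (h1 : 1 < Nat.card Q) :
    zpowers (g ^ p) ≠ ⊤ ∧ ∀ X : Subgroup Q, X ≠ ⊤ → X ≤ zpowers (g ^ p) := by
  haveI := Fact.mk hp
  have hzt : zpowers g = ⊤ := by
    rw [eq_top_iff]; exact fun q _ => hg q
  have hog : orderOf g = Nat.card Q := by
    rw [← Nat.card_zpowers, hzt, Subgroup.card_top]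
  obtain ⟨k, hk⟩ := hpg.exists_card_eq
  have hk0 : k ≠ 0 := by
    rintro rfl; rw [hk] at h1; simp at h1
  have hpn : p ∣ Nat.card Q := by
    rw [hk]; exact dvd_pow_self p hk0
  have hne : zpowers (g ^ p) ≠ ⊤ := by
    intro htop
    have h2 : orderOf (g ^ p) = Nat.card Q := by
      rw [← Nat.card_zpowers, htop, Subgroup.card_top]
    rw [orderOf_pow, hog, Nat.gcd_eq_right hpn] at h2
    have : Nat.card Q / p < Nat.card Q :=
      Nat.div_lt_self (by omega) hp.one_lt
    omega
  refine ⟨hne, fun X hX x hx => ?_⟩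
  obtain ⟨m, hm⟩ : ∃ m : ℕ, g ^ m = x := by
    have : x ∈ Submonoid.powers g := mem_powers_iff_mem_zpowers.2 (hg x)
    obtain ⟨m, hm⟩ := this; exact ⟨m, hm⟩
  by_cases hpm : p ∣ m
  · obtain ⟨c, rfl⟩ := hpm
    rw [← hm, pow_mul]
    exact pow_mem (mem_zpowers _) c
  · exfalso
    apply hX
    rw [eq_top_iff]
    intro y _
    have hgX : g ∈ X := by
      have hcop : Nat.Coprime m (p ^ k) :=
        (Nat.Coprime.pow_left k ((Nat.Prime.coprime_iff_not_dvd hp).2 hpm)).symm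
      refine mem_of_coprime_pows g hcop X (by rw [hm]; exact hx) ?_
      have : g ^ (p ^ k) = 1 := by rw [← hk, ← hog]; exact pow_orderOf_eq_one g
      rw [this]; exact one_mem X
    exact (zpowers_le.2 hgX) (hg y)

lemma isPGroup_of_equiv {p : ℕ} {A : Type u} {B : Type*} [Group A] [Group B]
    (e : A ≃* B) (h : IsPGroup p A) : IsPGroup p B := by
  intro b
  obtain ⟨k, hk⟩ := h (e.symm b)
  refine ⟨k, ?_⟩
  have := congrArg e hk
  simpa using this

/-- Pushing normal subgroups of a direct factor up. -/
lemma map_subtype_normal {H : Type u} [Group H] {D T : Subgroup H} (hT : T.Normal)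
    (hD : D.Normal)
    (hcomm : ∀ t ∈ T, ∀ d ∈ D, t * d = d * t)
    (hTD : T ⊔ D = ⊤) {L : Subgroup ↥D} (hL : L.Normal) :
    (L.map D.subtype).Normal := by
  constructor
  intro x hx h
  haveI := hT
  have hmem : h ∈ ((T ⊔ D : Subgroup H) : Set H) := by rw [hTD]; trivial
  rw [Subgroup.normal_mul] at hmem
  obtain ⟨t, ht, d, hd, rfl⟩ := hmem
  obtain ⟨x0, hx0, rfl⟩ := hx
  have hdx : d * (x0 : H) * d⁻¹ ∈ L.map D.subtype := by
    refine ⟨⟨d, hd⟩ * x0 * (⟨d, hd⟩ : ↥D)⁻¹, hL.conj_mem x0 hx0 ⟨d, hd⟩, rfl⟩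
  obtain ⟨y0, hy0, hy⟩ := hdx
  have hyD : (y0 : H) ∈ D := y0.2
  have hcomm' : t * (y0 : H) = (y0 : H) * t := hcomm t ht _ hyD
  have hy' : (y0 : H) = d * (x0 : H) * d⁻¹ := by simpa using hy
  have key : t * d * (x0 : H) * (t * d)⁻¹ = (y0 : H) := by
    rw [mul_inv_rev]
    calc t * d * (x0 : H) * (d⁻¹ * t⁻¹) = t * (d * (x0:H) * d⁻¹) * t⁻¹ := by group
    _ = t * (y0 : H) * t⁻¹ := by rw [← hy']
    _ = (y0 : H) * t * t⁻¹ := by rw [hcomm']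
    _ = (y0 : H) := by group
  exact ⟨y0, hy0, key.symm⟩

lemma cosoc_map_le {H : Type u} [Group H] {D T : Subgroup H} (hD : MaxN D) (hT : T.Normal)
    (hcomm : ∀ t ∈ T, ∀ d ∈ D, t * d = d * t)
    (hTD : T ⊔ D = ⊤) {M : Subgroup H} (hM : MaxN M) :
    (cosoc ↥D).map D.subtype ≤ M := by
  haveI := hM.1
  haveI := hD.1
  by_cases hDM : D ≤ M
  · have hDMeq : D = M := by
      rcases hDM.lt_or_eq with h | h
      · exact absurd (hD.2.2 M hM.1 h) hM.2.1
      · exact h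
    rw [← hDMeq]
    exact map_subtype_le _
  · have hsup : M ⊔ D = ⊤ := by
      refine hM.2.2 _ inferInstance (lt_of_le_of_ne le_sup_left ?_)
      intro h
      exact hDM (le_sup_right.trans h.ge)
    have hK0 : MaxN (M.subgroupOf D) := by
      refine ⟨Subgroup.normal_subgroupOf, ?_, ?_⟩
      · rw [ne_eq, subgroupOf_eq_top]; exact hDM
      · intro L hL hlt
        have hBLn : (L.map D.subtype).Normal :=
          map_subtype_normal hT hD.1 hcomm hTD hL
        have hBLD : L.map D.subtype ≤ D := map_subtype_le _
        have hnle : ¬ L.map D.subtype ≤ M := by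
          intro h
          exact hlt.not_ge (map_le_iff_le_comap.1 h)
        have hsup2 : M ⊔ L.map D.subtype = ⊤ := by
          haveI := hBLn
          refine hM.2.2 _ inferInstance (lt_of_le_of_ne le_sup_left ?_)
          intro h
          exact hnle (le_sup_right.trans h.ge)
        have hDle : D ≤ L.map D.subtype := by
          intro d hd
          have hmem : d ∈ ((L.map D.subtype ⊔ M : Subgroup H) : Set H) := by
            rw [sup_comm, hsup2]; trivial
          rw [Subgroup.mul_normal] at hmem
          obtain ⟨b, hb, m, hm, rfl⟩ := hmem
          have hmD : m ∈ D := by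
            have : m = b⁻¹ * (b * m) := by group
            rw [this]
            exact mul_mem (inv_mem (hBLD hb)) hd
          have hmMD : m ∈ map D.subtype (M.subgroupOf D) := by
            rw [subgroupOf_map_subtype]; exact ⟨hm, hmD⟩
          exact mul_mem hb (map_mono hlt.le hmMD)
        have hmapeq : L.map D.subtype = D := le_antisymm hBLD hDle
        have h2 := comap_map_eq_self_of_injective (subtype_injective D) L
        rw [hmapeq] at h2
        rw [← h2]
        exact subgroupOf_self D
    calc (cosoc ↥D).map D.subtype ≤ (M.subgroupOf D).map D.subtype :=
          map_mono (cosoc_le hK0)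
      _ = M ⊓ D := subgroupOf_map_subtype M D
      _ ≤ M := inf_le_left

/-- KEY: a finite group whose cosocle lies in `N` has no cyclic `p`-group quotient
`H⧸N` of order divisible by `p²`. -/
theorem cosoc_no_p2_quotient : ∀ (n : ℕ) {H : Type u} [Group H] [Finite H],
    Nat.card H = n →
    ∀ (N : Subgroup H) (hN : N.Normal), cosoc H ≤ N → ∀ p : ℕ, p.Prime →
    IsCyclic (H ⧸ N) → IsPGroup p (H ⧸ N) → ¬ (p ^ 2 ∣ Nat.card (H ⧸ N)) := by
  intro n
  induction n using Nat.strong_induction_on with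
  | _ n ih =>
    intro H _ _ hcard N hN hcos p hp hc hpg hdvd
    haveI := hN
    haveI := Fact.mk hp
    subst hcard
    -- basic cardinalities
    have hQpos : 0 < Nat.card (H ⧸ N) := Nat.card_pos
    have hQ1 : 1 < Nat.card (H ⧸ N) := by
      have h2 : p ^ 2 ≤ Nat.card (H ⧸ N) := Nat.le_of_dvd hQpos hdvd
      have : 1 < p ^ 2 := Nat.one_lt_pow two_ne_zero hp.one_lt
      omega
    have hH1 : 1 < Nat.card H := by
      have := Subgroup.card_eq_card_quotient_mul_card_subgroup N
      have hNpos : 0 < Nat.card N := Nat.card_pos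
      nlinarith
    haveI : Nontrivial H := Finite.one_lt_card_iff_nontrivial.1 hH1
    -- minimal nontrivial normal subgroup T
    obtain ⟨T, hTmem, hTmin'⟩ :
        ∃ T ∈ {K : Subgroup H | K.Normal ∧ K ≠ ⊥},
          ∀ K ∈ {K : Subgroup H | K.Normal ∧ K ≠ ⊥}, ¬ K < T := by
      have hfin : ({K : Subgroup H | K.Normal ∧ K ≠ ⊥}).Finite := Set.toFinite _
      have hne : (hfin.toFinset).Nonempty := by
        refine ⟨⊤, ?_⟩
        rw [Set.Finite.mem_toFinset]
        refine ⟨inferInstance, fun h => ?_⟩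
        obtain ⟨x, hx⟩ := exists_ne (1 : H)
        exact hx (Subgroup.mem_bot.1 (h ▸ Subgroup.mem_top x))
      obtain ⟨T, hT1, hT2⟩ : ∃ T ∈ hfin.toFinset, ∀ K ∈ hfin.toFinset, ¬ K < T := by
        obtain ⟨T, hT⟩ := Finset.exists_minimal hne
        exact ⟨T, hT.prop, fun K hK => hT.not_lt hK⟩
      rw [Set.Finite.mem_toFinset] at hT1
      exact ⟨T, hT1, fun K hK => hT2 K (by rwa [Set.Finite.mem_toFinset])⟩
    obtain ⟨hT1, hT2⟩ := hTmem
    haveI := hT1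
    have hTmin : ∀ K : Subgroup H, K.Normal → K ≠ ⊥ → K ≤ T → K = T := by
      intro K h1 h2 h3
      rcases h3.lt_or_eq with h | h
      · exact absurd h (hTmin' K ⟨h1, h2⟩)
      · exact h
    by_cases hTc : T ≤ cosoc H
    · -- quotient by T and recurse
      set ρ := QuotientGroup.mk' T with hρ
      have hρs : Function.Surjective ρ := QuotientGroup.mk'_surjective T
      have hTN : T ≤ N := hTc.trans hcos
      have hNmapn : (N.map ρ).Normal := hN.map ρ hρs
      haveI := hNmapn
      have hcomapmap : ∀ D : Subgroup H, T ≤ D → comap ρ (map ρ D) = D := by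
        intro D hTD
        rw [Subgroup.comap_map_eq, QuotientGroup.ker_mk', sup_eq_left.2 hTD]
      have hmax : ∀ D : Subgroup H, MaxN D → MaxN (D.map ρ) := by
        intro D hD
        haveI := hD.1
        have hTD : T ≤ D := hTc.trans (cosoc_le hD)
        refine ⟨hD.1.map ρ hρs, ?_, ?_⟩
        · intro h
          apply hD.2.1
          have := hcomapmap D hTD
          rw [h] at this
          simpa using this.symm
        · intro L hL hlt
          have h1 : D ≤ comap ρ L := by
            rw [← hcomapmap D hTD]; exact comap_mono hlt.le
          have h2 : D ≠ comap ρ L := by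
            intro h
            have : L = map ρ D := by
              rw [← map_comap_eq_self_of_surjective hρs L, ← h]
            exact hlt.ne' this
          have h3 : comap ρ L = ⊤ := hD.2.2 _ (hL.comap ρ) (lt_of_le_of_ne h1 h2)
          rw [← map_comap_eq_self_of_surjective hρs L, h3]
          rw [← MonoidHom.range_eq_map]
          exact MonoidHom.range_eq_top_of_surjective ρ hρs
      have hcos' : cosoc (H ⧸ T) ≤ N.map ρ := by
        intro x hx
        obtain ⟨y, rfl⟩ := hρs x
        have hyD : ∀ D : Subgroup H, MaxN D → y ∈ D := by
          intro D hD
          have h1 : ρ y ∈ D.map ρ := (cosoc_le (hmax D hD)) hx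
          have h2 : y ∈ comap ρ (map ρ D) := h1
          rwa [hcomapmap D (hTc.trans (cosoc_le hD))] at h2
        have : y ∈ cosoc H := Subgroup.mem_sInf.2 (fun D hD => hyD D hD)
        exact mem_map_of_mem ρ (hcos this)
      have hcT : 1 < Nat.card T := (Subgroup.one_lt_card_iff_ne_bot T).2 hT2
      have hlt : Nat.card (H ⧸ T) < Nat.card H := by
        have h1 := Subgroup.card_eq_card_quotient_mul_card_subgroup T
        have h2 : 0 < Nat.card (H ⧸ T) := Nat.card_pos
        nlinarith
      have e := QuotientGroup.quotientQuotientEquivQuotient T N hTN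
      refine ih _ hlt rfl (N.map ρ) hNmapn hcos' p hp ?_ ?_ ?_
      · exact isCyclic_of_surjective e.symm e.symm.surjective
      · exact isPGroup_of_equiv e.symm hpg
      · rw [Nat.card_congr e.toEquiv]; exact hdvd
    · -- there is a maximal normal D avoiding T
      obtain ⟨D, hD, hTD⟩ : ∃ D, MaxN D ∧ ¬ T ≤ D := by
        by_contra h
        push_neg at h
        exact hTc (le_sInf fun D hD => h D hD)
      haveI := hD.1
      have hInf : T ⊓ D = ⊥ := by
        by_contra hne
        have : T ⊓ D = T := hTmin _ inferInstance hne inf_le_left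
        exact hTD (by rw [← this]; exact inf_le_right)
      have hSup : T ⊔ D = ⊤ := by
        refine hD.2.2 _ inferInstance (lt_of_le_of_ne le_sup_right ?_)
        intro h
        exact hTD (le_sup_left.trans h.ge)
      have hcomm : ∀ t ∈ T, ∀ d ∈ D, t * d = d * t := by
        intro t ht d hd
        have h1 : t * d * t⁻¹ * d⁻¹ ∈ T := by
          have : t * d * t⁻¹ * d⁻¹ = t * (d * t⁻¹ * d⁻¹) := by group
          rw [this]
          exact mul_mem ht (hT1.conj_mem t⁻¹ (inv_mem ht) d)
        have h2 : t * d * t⁻¹ * d⁻¹ ∈ D :=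
          mul_mem (hD.1.conj_mem d hd t) (inv_mem hd)
        have h3 : t * d * t⁻¹ * d⁻¹ = 1 := by
          have : t * d * t⁻¹ * d⁻¹ ∈ T ⊓ D := ⟨h1, h2⟩
          rwa [hInf, Subgroup.mem_bot] at this
        calc t * d = (t * d * t⁻¹ * d⁻¹) * (d * t) := by group
          _ = d * t := by rw [h3]; group
      set π := QuotientGroup.mk' N with hπ
      have hπs : Function.Surjective π := QuotientGroup.mk'_surjective N
      obtain ⟨g, hg⟩ := hc.exists_generator
      obtain ⟨hPne, hproper⟩ := cyc_pgroup_proper_le hg hp hpg hQ1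
      by_cases hDbar : D.map π = ⊤
      · -- recurse into D
        have hφs : Function.Surjective (π.comp D.subtype) := by
          intro q
          have : q ∈ D.map π := by rw [hDbar]; trivial
          obtain ⟨d, hd, rfl⟩ := this
          exact ⟨⟨d, hd⟩, rfl⟩
        set φ := π.comp D.subtype with hφ
        have e := QuotientGroup.quotientKerEquivOfSurjective φ hφs
        have hcosD : cosoc ↥D ≤ φ.ker := by
          intro x hx
          have hxN : (x : H) ∈ N := by
            have h1 : (x : H) ∈ (cosoc ↥D).map D.subtype := mem_map_of_mem _ hx
            have h2 : (cosoc ↥D).map D.subtype ≤ cosoc H :=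
              le_sInf (fun M hM => cosoc_map_le hD hT1 hcomm hSup hM)
            exact hcos (h2 h1)
          rw [MonoidHom.mem_ker]
          show π (x : H) = 1
          rw [hπ, QuotientGroup.mk'_apply, QuotientGroup.eq_one_iff]
          exact hxN
        have hDlt : Nat.card ↥D < Nat.card H := by
          obtain ⟨h0, hh0⟩ : ∃ h0 : H, h0 ∉ D := by
            by_contra h
            push_neg at h
            exact hD.2.1 (eq_top_iff.2 fun x _ => h x)
          have h1 : (D : Set H) ⊂ Set.univ := by
            rw [Set.ssubset_univ_iff]
            intro h
            have : h0 ∈ (D : Set H) := h ▸ Set.mem_univ h0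
            exact hh0 this
          calc Nat.card ↥D = (D : Set H).ncard := Nat.card_coe_set_eq _
            _ < (Set.univ : Set H).ncard := Set.ncard_lt_ncard h1 Set.finite_univ
            _ = Nat.card H := Set.ncard_univ H
        refine ih _ hDlt rfl φ.ker inferInstance hcosD p hp ?_ ?_ ?_
        · exact isCyclic_of_surjective e.symm e.symm.surjective
        · exact isPGroup_of_equiv e.symm hpg
        · rw [Nat.card_congr e.toEquiv]; exact hdvd
      · have hDP : D.map π ≤ zpowers (g ^ p) := hproper _ hDbar
        by_cases hTbar : T.map π = ⊤
        · -- the W-contradiction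
          have hQcomm : ∀ a b : H ⧸ N, a * b = b * a := by
            intro a b
            obtain ⟨i, hi⟩ := Subgroup.mem_zpowers_iff.1 (hg a)
            obtain ⟨j, hj⟩ := Subgroup.mem_zpowers_iff.1 (hg b)
            rw [← hi, ← hj, ← zpow_add, ← zpow_add, add_comm]
          have hPn : (comap π (zpowers (g ^ p))).Normal := by
            constructor
            intro x hx h
            rw [Subgroup.mem_comap] at hx ⊢
            rw [map_mul, map_mul, map_inv]
            have : π h * π x * (π h)⁻¹ = π x := by
              rw [hQcomm (π h) (π x)]; group
            rw [this]
            exact hx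
          have hX : T ⊓ comap π (zpowers (g ^ p)) ≠ T := by
            intro h
            have h1 : T ≤ comap π (zpowers (g ^ p)) := by
              rw [← h]; exact inf_le_right
            have h2 : T.map π ≤ zpowers (g ^ p) := map_le_iff_le_comap.2 h1
            rw [hTbar] at h2
            exact hPne (top_le_iff.1 h2)
          have hXbot : T ⊓ comap π (zpowers (g ^ p)) = ⊥ := by
            by_contra hne
            exact hX (hTmin _ inferInstance hne inf_le_left)
          have hTNbot : T ⊓ N = ⊥ := by
            have h1 : T ⊓ N ≤ T ⊓ comap π (zpowers (g ^ p)) := by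
              refine inf_le_inf_left T ?_
              intro x hx
              rw [Subgroup.mem_comap]
              have : π x = 1 := by
                rw [hπ, QuotientGroup.mk'_apply, QuotientGroup.eq_one_iff]
                exact hx
              rw [this]
              exact one_mem _
            rw [← le_bot_iff]
            exact hXbot ▸ h1
          have hinj : ∀ x ∈ T, π x = 1 → x = 1 := by
            intro x hx h1
            have : x ∈ T ⊓ N := by
              refine ⟨hx, ?_⟩
              rw [hπ, QuotientGroup.mk'_apply] at h1
              exact (QuotientGroup.eq_one_iff x).1 h1
            rwa [hTNbot, Subgroup.mem_bot] at this
          -- order of g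
          obtain ⟨k, hk⟩ := hpg.exists_card_eq
          have hog : orderOf g = p ^ k := by
            have hzt : zpowers g = ⊤ := eq_top_iff.2 fun q _ => hg q
            rw [← Nat.card_zpowers, hzt, Subgroup.card_top, hk]
          have hk2 : 2 ≤ k :=
            (Nat.pow_dvd_pow_iff_le_right hp.one_lt).1 (by rw [← hk]; exact hdvd)
          obtain ⟨t₀, ht₀T, ht₀⟩ : ∃ t ∈ T, π t = g := by
            have : g ∈ T.map π := by rw [hTbar]; trivial
            obtain ⟨t, ht, h⟩ := this
            exact ⟨t, ht, h⟩
          have hTcomm : ∀ x ∈ T, ∀ y ∈ T, x * y = y * x := by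
            intro x hx y hy
            have h1 : x * y * x⁻¹ * y⁻¹ ∈ T := by
              have : x * y * x⁻¹ * y⁻¹ = x * (y * x⁻¹ * y⁻¹) := by group
              rw [this]
              exact mul_mem hx (hT1.conj_mem x⁻¹ (inv_mem hx) y)
            have h2 : π (x * y * x⁻¹ * y⁻¹) = 1 := by
              rw [map_mul, map_mul, map_mul, map_inv, map_inv]
              rw [hQcomm (π x) (π y)]
              group
            have h3 : x * y * x⁻¹ * y⁻¹ = 1 := hinj _ h1 h2
            calc x * y = (x * y * x⁻¹ * y⁻¹) * (y * x) := by group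
              _ = y * x := by rw [h3]; group
          set W : Subgroup H :=
            { carrier := {x | x ∈ T ∧ x ^ p = 1}
              one_mem' := ⟨one_mem T, one_pow p⟩
              mul_mem' := by
                rintro a b ⟨haT, hap⟩ ⟨hbT, hbp⟩
                refine ⟨mul_mem haT hbT, ?_⟩
                have hcab : Commute a b := hTcomm a haT b hbT
                rw [hcab.mul_pow, hap, hbp, one_mul]
              inv_mem' := by
                rintro a ⟨haT, hap⟩
                exact ⟨inv_mem haT, by rw [inv_pow, hap, inv_one]⟩ } with hW
          have hWn : W.Normal := by
            constructor
            rintro x ⟨hxT, hxp⟩ h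
            refine ⟨hT1.conj_mem x hxT h, ?_⟩
            rw [conj_pow, hxp, mul_one, mul_inv_cancel]
          have hWT : W ≤ T := fun x hx => hx.1
          have hWneT : W ≠ T := by
            intro h
            have ht0W : t₀ ∈ W := by rw [h]; exact ht₀T
            have : π (t₀ ^ p) = 1 := by
              rw [ht0W.2, map_one]
            rw [map_pow, ht₀] at this
            have hdd : orderOf g ∣ p := orderOf_dvd_iff_pow_eq_one.2 this
            rw [hog] at hdd
            have hdd2 : p ^ k ∣ p ^ 1 := by rw [pow_one]; exact hdd
            have hk1 := (Nat.pow_dvd_pow_iff_le_right hp.one_lt).1 hdd2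
            omega
          have hWbot : W ≠ ⊥ := by
            set s := t₀ ^ (p ^ (k - 1)) with hs
            have hsT : s ∈ T := pow_mem ht₀T _
            have hπs' : π s = g ^ (p ^ (k - 1)) := by rw [hs, map_pow, ht₀]
            have hsp : s ^ p ∈ T := pow_mem hsT p
            have hsp1 : s ^ p = 1 := by
              refine hinj _ hsp ?_
              rw [map_pow, hπs', ← pow_mul]
              have h5 : p ^ (k - 1) * p = p ^ k := by
                rw [← pow_succ]
                congr 1
                omega
              rw [h5, ← hog]
              exact pow_orderOf_eq_one g
            have hsne : s ≠ 1 := by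
              intro h
              have : π s = 1 := by rw [h, map_one]
              rw [hπs'] at this
              have : orderOf g ∣ p ^ (k - 1) := orderOf_dvd_iff_pow_eq_one.2 this
              rw [hog] at this
              have := (Nat.pow_dvd_pow_iff_le_right hp.one_lt).1 this
              omega
            intro h
            have : s ∈ W := ⟨hsT, hsp1⟩
            rw [h, Subgroup.mem_bot] at this
            exact hsne this
          exact hWneT (hTmin W hWn hWbot hWT)
        · -- both images proper: contradiction
          have hTP : T.map π ≤ zpowers (g ^ p) := hproper _ hTbar
          have htop : (⊤ : Subgroup (H ⧸ N)) ≤ zpowers (g ^ p) := by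
            have h1 : map π ⊤ = ⊤ := by
              rw [← MonoidHom.range_eq_map]
              exact MonoidHom.range_eq_top_of_surjective π hπs
            calc (⊤ : Subgroup (H ⧸ N)) = map π (T ⊔ D) := by rw [hSup, h1]
              _ = T.map π ⊔ D.map π := Subgroup.map_sup T D π
              _ ≤ zpowers (g ^ p) := sup_le hTP hDP
          exact hPne (top_le_iff.1 htop)

lemma qfact {Q : Type*} [Group Q] [Finite Q] [Nontrivial Q] (Bq : Subgroup Q)
    (hall : ∀ X : Subgroup Q, X = ⊤ ∨ X ≤ Bq) (hBqne : Bq ≠ ⊤) :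
    (Bq = ⊥ → (Nat.card Q).Prime) ∧
      (Bq ≠ ⊥ → ∃ p : ℕ, p.Prime ∧ IsCyclic Q ∧ IsPGroup p Q ∧ p ^ 2 ∣ Nat.card Q) := by
  obtain ⟨x, hx⟩ : ∃ x : Q, x ∉ Bq := by
    by_contra h
    push_neg at h
    exact hBqne (eq_top_iff.2 fun y _ => h y)
  have hzx : zpowers x = ⊤ := by
    rcases hall (zpowers x) with h | h
    · exact h
    · exact absurd (h (mem_zpowers x)) hx
  have hcyc : IsCyclic Q := ⟨⟨x, fun y => show y ∈ zpowers x by rw [hzx]; trivial⟩⟩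
  have hn1 : 1 < Nat.card Q := Finite.one_lt_card_iff_nontrivial.2 inferInstance
  have hox : orderOf x = Nat.card Q := by
    rw [← Nat.card_zpowers, hzx, Subgroup.card_top]
  have hpow : ∀ q : ℕ, q.Prime → q ∣ Nat.card Q → x ^ q ∈ Bq := by
    intro q hq hqn
    have hne : zpowers (x ^ q) ≠ ⊤ := by
      intro h
      have h2 : orderOf (x ^ q) = Nat.card Q := by
        rw [← Nat.card_zpowers, h, Subgroup.card_top]
      rw [orderOf_pow, hox, Nat.gcd_eq_right hqn] at h2
      have : Nat.card Q / q < Nat.card Q := Nat.div_lt_self (by omega) hq.one_lt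
      omega
    rcases hall (zpowers (x ^ q)) with h | h
    · exact absurd h hne
    · exact h (mem_zpowers _)
  have huniq : ∀ q r : ℕ, q.Prime → r.Prime → q ∣ Nat.card Q → r ∣ Nat.card Q → q = r := by
    intro q r hq hr hqn hrn
    by_contra hne
    exact hx (mem_of_coprime_pows x ((Nat.coprime_primes hq hr).2 hne) Bq
      (hpow q hq hqn) (hpow r hr hrn))
  have hp : (Nat.card Q).minFac.Prime := Nat.minFac_prime (by omega)
  have hpn : (Nat.card Q).minFac ∣ Nat.card Q := Nat.minFac_dvd _
  set p := (Nat.card Q).minFac with hpdef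
  have hnpk : Nat.card Q = p ^ (Nat.card Q).primeFactorsList.length :=
    Nat.eq_prime_pow_of_unique_prime_dvd (by omega)
      (fun {d} hd hdn => huniq d p hd hp hdn hpn)
  set k := (Nat.card Q).primeFactorsList.length with hkdef
  have hk0 : k ≠ 0 := by
    intro h
    rw [h, pow_zero] at hnpk
    omega
  constructor
  · intro hbot
    have hk1 : k = 1 := by
      by_contra hk1
      have h1 : x ^ p ∈ Bq := hpow p hp hpn
      rw [hbot, Subgroup.mem_bot] at h1
      have h2 : orderOf x ∣ p := orderOf_dvd_iff_pow_eq_one.2 h1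
      rw [hox] at h2
      have h3 : p ≤ Nat.card Q := Nat.le_of_dvd (by omega) hpn
      have h4 : Nat.card Q ≤ p := Nat.le_of_dvd hp.pos h2
      have h5 : p ^ k = p ^ 1 := by rw [pow_one, ← hnpk]; omega
      have := Nat.pow_right_injective hp.two_le h5
      omega
    rw [hnpk, hk1, pow_one]
    exact hp
  · intro hne
    refine ⟨p, hp, hcyc, IsPGroup.of_card hnpk, ?_⟩
    have hk2 : 2 ≤ k := by
      by_contra h
      have hk1 : k = 1 := by omega
      rw [hk1, pow_one] at hnpk
      have hc1 : Nat.card Bq ∣ Nat.card Q := Subgroup.card_subgroup_dvd_card Bq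
      rw [hnpk] at hc1
      rcases hp.eq_one_or_self_of_dvd _ hc1 with h1 | h1
      · exact hne (Subgroup.card_eq_one.1 h1)
      · exact hBqne (Subgroup.eq_top_of_card_eq Bq (by rw [h1, ← hnpk]))
    rw [hnpk]
    exact pow_dvd_pow p hk2

lemma mem_conj_map {G : Type*} [Group G] {D : Subgroup G} {g x : G} :
    x ∈ D.map (MulAut.conj g).toMonoidHom ↔ g⁻¹ * x * g ∈ D := by
  constructor
  · rintro ⟨d, hd, rfl⟩
    have h3 : g⁻¹ * ((MulAut.conj g).toMonoidHom d) * g = d := by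
      simp [MulAut.conj_apply]
      group
    rwa [h3]
  · intro h
    refine ⟨g⁻¹ * x * g, h, ?_⟩
    simp [MulAut.conj_apply]
    group

lemma conj_map_inv_map {G : Type*} [Group G] (g : G) (D : Subgroup G) :
    (D.map (MulAut.conj g).toMonoidHom).map (MulAut.conj g⁻¹).toMonoidHom = D := by
  ext x
  rw [mem_conj_map, mem_conj_map]
  constructor
  · intro h
    have h3 : g⁻¹ * ((g⁻¹)⁻¹ * x * g⁻¹) * g = x := by group
    rwa [h3] at h
  · intro h
    have h3 : g⁻¹ * ((g⁻¹)⁻¹ * x * g⁻¹) * g = x := by group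
    rwa [h3]

lemma conj_map_of_normal {G : Type*} [Group G] {A : Subgroup G} (hA : A.Normal) (g : G) :
    A.map (MulAut.conj g).toMonoidHom = A := by
  ext x
  rw [mem_conj_map]
  constructor
  · intro h
    have h2 := hA.conj_mem _ h g
    have h3 : g * (g⁻¹ * x * g) * g⁻¹ = x := by group
    rwa [h3] at h2
  · intro h
    have h2 := hA.conj_mem x h g⁻¹
    have h3 : g⁻¹ * x * (g⁻¹)⁻¹ = g⁻¹ * x * g := by group
    rwa [h3] at h2

lemma conj_pair {G : Type*} [Group G] {A C : Subgroup G} (hA : A.Normal)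
    (hCA : C ≤ A) (hCc : ∀ a ∈ A, ∀ c ∈ C, a * c * a⁻¹ ∈ C) (g : G) :
    (C.map (MulAut.conj g).toMonoidHom ≤ A) ∧
      (∀ a ∈ A, ∀ c ∈ C.map (MulAut.conj g).toMonoidHom,
        a * c * a⁻¹ ∈ C.map (MulAut.conj g).toMonoidHom) := by
  constructor
  · intro x hx
    rw [mem_conj_map] at hx
    have h2 := hA.conj_mem _ (hCA hx) g
    have h3 : g * (g⁻¹ * x * g) * g⁻¹ = x := by group
    rwa [h3] at h2
  · intro a ha x hx
    rw [mem_conj_map] at hx ⊢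
    have ha' : g⁻¹ * a * g ∈ A := by
      have h2 := hA.conj_mem a ha g⁻¹
      have h3 : g⁻¹ * a * (g⁻¹)⁻¹ = g⁻¹ * a * g := by group
      rwa [h3] at h2
    have h2 := hCc _ ha' _ hx
    have h3 : (g⁻¹ * a * g) * (g⁻¹ * x * g) * (g⁻¹ * a * g)⁻¹ = g⁻¹ * (a * x * a⁻¹) * g := by
      group
    rwa [h3] at h2

lemma isMaxNormalIn_conj {G : Type*} [Group G] {A : Subgroup G} (hA : A.Normal)
    (g : G) {D : Subgroup G} (h : IsMaxNormalIn G A D) :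
    IsMaxNormalIn G A (D.map (MulAut.conj g).toMonoidHom) := by
  obtain ⟨⟨hDA, hconj⟩, hlt, hmax⟩ := h
  have hpair := conj_pair hA hDA hconj g
  refine ⟨hpair, ?_, ?_⟩
  · refine lt_of_le_of_ne hpair.1 ?_
    intro heq
    apply hlt.ne
    have h2 := congrArg (fun Y : Subgroup G => Y.map (MulAut.conj g⁻¹).toMonoidHom) heq
    rw [conj_map_inv_map, conj_map_of_normal hA] at h2
    exact h2
  · rintro C ⟨hCA, hCc⟩ hClt hDC
    have hpair' := conj_pair hA hCA hCc g⁻¹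
    have hClt' : C.map (MulAut.conj g⁻¹).toMonoidHom < A := by
      refine lt_of_le_of_ne hpair'.1 ?_
      intro heq
      apply hClt.ne
      have h2 := congrArg (fun Y : Subgroup G => Y.map (MulAut.conj g⁻¹⁻¹).toMonoidHom) heq
      rw [conj_map_inv_map g⁻¹ C, conj_map_of_normal hA] at h2
      exact h2
    have hDC' : D ≤ C.map (MulAut.conj g⁻¹).toMonoidHom := by
      have h2 := Subgroup.map_mono (f := (MulAut.conj g⁻¹).toMonoidHom) hDC
      rwa [conj_map_inv_map] at h2
    have h3 := hmax _ ⟨hpair'.1, hpair'.2⟩ hClt' hDC'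
    have h4 := congrArg (fun Y : Subgroup G => Y.map (MulAut.conj g⁻¹⁻¹).toMonoidHom) h3
    rw [conj_map_inv_map g⁻¹ C] at h4
    rw [← h4, inv_inv]

lemma mel_normal {G : Type*} [Group G] {A : Subgroup G} (hA : A.Normal) :
    (Mel G A).Normal := by
  constructor
  intro b hb g
  have hb' : ∀ D ∈ {B : Subgroup G | IsMaxNormalIn G A B}, b ∈ D := Subgroup.mem_sInf.1 hb
  refine Subgroup.mem_sInf.2 fun D hD => ?_
  have h1 : b ∈ D.map (MulAut.conj g⁻¹).toMonoidHom :=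
    hb' _ (isMaxNormalIn_conj hA g⁻¹ hD)
  rw [mem_conj_map] at h1
  have h3 : (g⁻¹)⁻¹ * b * g⁻¹ = g * b * g⁻¹ := by group
  rwa [h3] at h1

lemma isMaxNormalIn_subgroupOf {G : Type*} [Group G] {A B : Subgroup G}
    (h : IsMaxNormalIn G A B) : MaxN (B.subgroupOf A) := by
  obtain ⟨⟨hBA, hconj⟩, hlt, hmax⟩ := h
  refine ⟨?_, ?_, ?_⟩
  · constructor
    rintro ⟨x, hxA⟩ hx ⟨a, haA⟩
    rw [Subgroup.mem_subgroupOf] at hx ⊢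
    exact hconj a haA x hx
  · rw [ne_eq, subgroupOf_eq_top]
    exact hlt.not_ge
  · intro L hL hlt2
    set C := L.map A.subtype with hC
    have hCA : C ≤ A := map_subtype_le L
    have hCc : ∀ a ∈ A, ∀ c ∈ C, a * c * a⁻¹ ∈ C := by
      rintro a ha c ⟨x, hxL, rfl⟩
      exact ⟨(⟨a, ha⟩ : ↥A) * x * (⟨a, ha⟩ : ↥A)⁻¹, hL.conj_mem x hxL _, rfl⟩
    have hBC : B ≤ C := by
      intro b hb
      exact ⟨⟨b, hBA hb⟩, hlt2.le (Subgroup.mem_subgroupOf.2 hb), rfl⟩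
    have h2 := comap_map_eq_self_of_injective (subtype_injective A) L
    rw [← hC] at h2
    have hCne : C ≠ B := by
      intro h
      rw [h] at h2
      exact hlt2.ne h2
    have hCtop : C = A := by
      rcases hCA.lt_or_eq with h | h
      · exact absurd (hmax C ⟨hCA, hCc⟩ h hBC).symm hCne
      · exact h
    rw [hCtop] at h2
    rw [← h2]
    exact subgroupOf_self A

lemma maxN_map_subtype {G : Type*} [Group G] {A : Subgroup G} {K : Subgroup ↥A}
    (h : MaxN K) : IsMaxNormalIn G A (K.map A.subtype) := by
  obtain ⟨hn, hne, hmax⟩ := h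
  refine ⟨⟨map_subtype_le K, ?_⟩, ?_, ?_⟩
  · rintro a ha b ⟨x, hxK, rfl⟩
    exact ⟨(⟨a, ha⟩ : ↥A) * x * (⟨a, ha⟩ : ↥A)⁻¹, hn.conj_mem x hxK _, rfl⟩
  · refine lt_of_le_of_ne (map_subtype_le K) ?_
    intro h
    apply hne
    have h2 := comap_map_eq_self_of_injective (subtype_injective A) K
    rw [h] at h2
    rw [← h2]
    exact subgroupOf_self A
  · rintro C ⟨hCA, hCc⟩ hClt hKC
    have hL : (C.subgroupOf A).Normal := by
      constructor
      rintro ⟨x, hxA⟩ hx ⟨a, haA⟩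
      rw [Subgroup.mem_subgroupOf] at hx ⊢
      exact hCc a haA x hx
    have h1 : K ≤ C.subgroupOf A := map_le_iff_le_comap.1 hKC
    have h2 : C.subgroupOf A ≠ ⊤ := by
      rw [ne_eq, subgroupOf_eq_top]
      exact hClt.not_ge
    have h3 : K = C.subgroupOf A := by
      rcases h1.lt_or_eq with h | h
      · exact absurd (hmax _ hL h) h2
      · exact h
    rw [h3, subgroupOf_map_subtype, inf_eq_left.2 hCA]

/-- Let `G` be finite and `A ⊴ G` nontrivial with `A > M(A)[A,G]`.  Then `A` is narrow in
`G` iff `|A : M(A)[A,G]|` is prime and every chief factor of `G` of the form `A/C` is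
central; moreover in that case `M_G(A) = M(A)[A,G]`. -/
theorem narrow_iff_prime_index_and_central (G : Type*) [Group G] [Finite G]
    (A : Subgroup G) (hA : A.Normal) (hnt : A ≠ ⊥)
    (hgt : Mel G A ⊔ ⁅A, (⊤ : Subgroup G)⁆ < A) :
    (Narrow G A ↔
      (((Mel G A ⊔ ⁅A, (⊤ : Subgroup G)⁆).relIndex A).Prime ∧
        ∀ C : Subgroup G, C.Normal → C < A →
          (∀ M : Subgroup G, M.Normal → C < M → M < A → False) →
          ∀ a ∈ A, ∀ g : G, ⁅a, g⁆ ∈ C)) ∧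
    (Narrow G A → MG G A = Mel G A ⊔ ⁅A, (⊤ : Subgroup G)⁆) := by
  classical
  haveI := hA
  set N := Mel G A ⊔ ⁅A, (⊤ : Subgroup G)⁆ with hNdef
  haveI hMeln : (Mel G A).Normal := mel_normal hA
  have hNn : N.Normal := by rw [hNdef]; infer_instance
  have hNA : N ≤ A := hgt.le
  have hNGInv : IsGInv G A N := ⟨hNA, fun g b hb => hNn.conj_mem b hb g⟩
  have hcommle : ⁅A, (⊤ : Subgroup G)⁆ ≤ N := le_sup_right
  have hMelle : Mel G A ≤ N := le_sup_left
  have hGInvOf : ∀ C : Subgroup G, C ≤ A → ⁅A, (⊤ : Subgroup G)⁆ ≤ C → IsGInv G A C := by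
    intro C hCA hcC
    refine ⟨hCA, fun g b hb => ?_⟩
    have hc : ⁅b⁻¹, g⁆ ∈ C :=
      hcC (Subgroup.commutator_mem_commutator (inv_mem (hCA hb)) (Subgroup.mem_top g))
    have heq : g * b * g⁻¹ = b * ⁅b⁻¹, g⁆ := by
      rw [commutatorElement_def]; group
    rw [heq]
    exact mul_mem hb hc
  have hmaxnIn : ∀ B : Subgroup G, IsMaxGInv G A B → ⁅A, (⊤ : Subgroup G)⁆ ≤ B →
      IsMaxNormalIn G A B := by
    intro B hB hcB
    refine ⟨⟨hB.2.1.le, fun a _ b hb => hB.1.2 a b hb⟩, hB.2.1, ?_⟩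
    rintro K ⟨hKA, hKc⟩ hKlt hBK
    exact hB.2.2 K (hGInvOf K hKA (hcB.trans hBK)) hKlt hBK
  have hext : ∀ C : Subgroup G, IsGInv G A C → C < A → ∃ B, IsMaxGInv G A B ∧ C ≤ B := by
    intro C hC hlt
    have hfin : ({Y : Subgroup G | IsGInv G A Y ∧ Y < A ∧ C ≤ Y}).Finite := Set.toFinite _
    have hne : (hfin.toFinset).Nonempty := by
      refine ⟨C, ?_⟩
      rw [Set.Finite.mem_toFinset]
      exact ⟨hC, hlt, le_refl C⟩
    obtain ⟨B, hBmem, hBmax⟩ : ∃ B ∈ hfin.toFinset, ∀ K ∈ hfin.toFinset, ¬ B < K := by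
      obtain ⟨B, hB⟩ := Finset.exists_maximal hne
      exact ⟨B, hB.prop, fun K hK => hB.not_gt hK⟩
    rw [Set.Finite.mem_toFinset] at hBmem
    refine ⟨B, ⟨hBmem.1, hBmem.2.1, ?_⟩, hBmem.2.2⟩
    intro C' hC' hC'lt hBC'
    by_contra hne'
    refine hBmax C' ?_ (lt_of_le_of_ne hBC' hne')
    rw [Set.Finite.mem_toFinset]
    exact ⟨hC', hC'lt, hBmem.2.2.trans hBC'⟩
  have hforward : Narrow G A → (N.relIndex A).Prime ∧
      (∀ C : Subgroup G, C.Normal → C < A →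
        (∀ M : Subgroup G, M.Normal → C < M → M < A → False) →
        ∀ a ∈ A, ∀ g : G, ⁅a, g⁆ ∈ C) ∧ MG G A = N := by
    intro hnar
    obtain ⟨B, hB, huniq⟩ := hnar
    have hprop : ∀ C : Subgroup G, IsGInv G A C → C < A → C ≤ B := by
      intro C h1 h2
      obtain ⟨M, hM, hCM⟩ := hext C h1 h2
      rw [← huniq M hM]
      exact hCM
    have hNB : N ≤ B := hprop N hNGInv hgt
    have hBn : B.Normal := ⟨fun b hb g => hB.1.2 g b hb⟩
    have hBA : B < A := hB.2.1
    have hcommB : ⁅A, (⊤ : Subgroup G)⁆ ≤ B := hcommle.trans hNB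
    have hcent : ∀ C : Subgroup G, C.Normal → C < A →
        (∀ M : Subgroup G, M.Normal → C < M → M < A → False) →
        ∀ a ∈ A, ∀ g : G, ⁅a, g⁆ ∈ C := by
      intro C hCn hClt hchief a ha g
      have hCB : C ≤ B := hprop C ⟨hClt.le, fun g' b hb => hCn.conj_mem b hb g'⟩ hClt
      have hCeqB : C = B := by
        rcases hCB.lt_or_eq with h | h
        · exact (hchief B hBn h hBA).elim
        · exact h
      rw [hCeqB]
      exact hcommB (Subgroup.commutator_mem_commutator ha (Subgroup.mem_top g))
    have hN₀n : ((N.subgroupOf A)).Normal := Subgroup.normal_subgroupOf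
    haveI := hN₀n
    set π := QuotientGroup.mk' (N.subgroupOf A) with hπ
    have hπs := QuotientGroup.mk'_surjective (N.subgroupOf A)
    haveI : Nontrivial (↥A ⧸ N.subgroupOf A) := by
      obtain ⟨a, haA, haN⟩ := SetLike.exists_of_lt hgt
      refine ⟨π ⟨a, haA⟩, 1, ?_⟩
      rw [ne_eq, hπ, QuotientGroup.mk'_apply, QuotientGroup.eq_one_iff]
      intro h
      exact haN (Subgroup.mem_subgroupOf.1 h)
    set Bq := (B.subgroupOf A).map π with hBq
    have hall : ∀ X : Subgroup (↥A ⧸ N.subgroupOf A), X = ⊤ ∨ X ≤ Bq := by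
      intro X
      set C := (Subgroup.comap π X).map A.subtype with hC
      have hNC : N ≤ C := by
        intro x hx
        refine ⟨⟨x, hNA hx⟩, ?_, rfl⟩
        rw [SetLike.mem_coe, Subgroup.mem_comap]
        have h1 : π ⟨x, hNA hx⟩ = 1 := by
          rw [hπ, QuotientGroup.mk'_apply, QuotientGroup.eq_one_iff]
          exact Subgroup.mem_subgroupOf.2 hx
        rw [h1]
        exact one_mem X
      have hCA : C ≤ A := map_subtype_le _
      have hCG : IsGInv G A C := hGInvOf C hCA (hcommle.trans hNC)
      rcases hCA.lt_or_eq with h | h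
      · right
        have hCB : C ≤ B := hprop C hCG h
        have h1 : Subgroup.comap π X ≤ B.subgroupOf A := by
          intro x hx
          exact Subgroup.mem_subgroupOf.2 (hCB ⟨x, hx, rfl⟩)
        calc X = Subgroup.map π (Subgroup.comap π X) :=
              (map_comap_eq_self_of_surjective hπs X).symm
          _ ≤ Bq := Subgroup.map_mono h1
      · left
        have h2 : Subgroup.comap π X = ⊤ := by
          rw [eq_top_iff]
          rintro ⟨x, hxA⟩ _
          have h3 : x ∈ C := by rw [h]; exact hxA
          obtain ⟨y, hy, hyx⟩ := h3
          have h4 : (⟨x, hxA⟩ : ↥A) = y := Subtype.ext hyx.symm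
          rw [h4]
          exact hy
        rw [← map_comap_eq_self_of_surjective hπs X, h2, ← MonoidHom.range_eq_map]
        exact MonoidHom.range_eq_top_of_surjective π hπs
    have hBqne : Bq ≠ ⊤ := by
      intro h
      have hsub : N.subgroupOf A ≤ B.subgroupOf A := by
        intro x hx
        exact Subgroup.mem_subgroupOf.2 (hNB (Subgroup.mem_subgroupOf.1 hx))
      have h1 : Subgroup.comap π (Subgroup.map π (B.subgroupOf A)) = B.subgroupOf A := by
        rw [Subgroup.comap_map_eq, hπ, QuotientGroup.ker_mk', sup_eq_left.2 hsub]
      rw [← hBq, h, Subgroup.comap_top] at h1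
      have h2 : A ≤ B := subgroupOf_eq_top.1 h1.symm
      exact hBA.not_ge h2
    have hMelB : Mel G A ≤ B := sInf_le (hmaxnIn B hB hcommB)
    have hcosA : cosoc ↥A ≤ N.subgroupOf A := by
      intro x hx
      have h1 : (x : G) ∈ Mel G A := by
        refine Subgroup.mem_sInf.2 fun D hD => ?_
        have h2 := cosoc_le (isMaxNormalIn_subgroupOf hD) hx
        exact Subgroup.mem_subgroupOf.1 h2
      exact Subgroup.mem_subgroupOf.2 (hMelle h1)
    have hBN : B = N := by
      by_contra hne
      have hNltB : N < B := lt_of_le_of_ne hNB (Ne.symm hne)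
      have hBqnebot : Bq ≠ ⊥ := by
        obtain ⟨b, hbB, hbN⟩ := SetLike.exists_of_lt hNltB
        intro h
        have h1 : π ⟨b, hBA.le hbB⟩ ∈ Bq :=
          Subgroup.mem_map_of_mem π (Subgroup.mem_subgroupOf.2 hbB)
        rw [h, Subgroup.mem_bot, hπ, QuotientGroup.mk'_apply,
          QuotientGroup.eq_one_iff] at h1
        exact hbN (Subgroup.mem_subgroupOf.1 h1)
      obtain ⟨p, hp, hcyc, hpg, hdvd⟩ := (qfact Bq hall hBqne).2 hBqnebot
      exact cosoc_no_p2_quotient (Nat.card ↥A) rfl (N.subgroupOf A) hN₀n hcosA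
        p hp hcyc hpg hdvd
    have hBqbot : Bq = ⊥ := by
      rw [hBq, eq_bot_iff]
      rintro x ⟨y, hy, rfl⟩
      rw [Subgroup.mem_bot, hπ, QuotientGroup.mk'_apply, QuotientGroup.eq_one_iff]
      rw [hBN] at hy
      exact hy
    have hprime : (N.relIndex A).Prime := by
      have h1 := (qfact Bq hall hBqne).1 hBqbot
      have h2 : N.relIndex A = Nat.card (↥A ⧸ N.subgroupOf A) :=
        Subgroup.index_eq_card (N.subgroupOf A)
      rwa [h2]
    refine ⟨hprime, hcent, ?_⟩
    have hset : {B' : Subgroup G | IsMaxGInv G A B'} = {B} :=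
      Set.eq_singleton_iff_unique_mem.2 ⟨hB, huniq⟩
    rw [MG, hset, sInf_singleton, hBN]
  constructor
  · constructor
    · intro hnar
      obtain ⟨h1, h2, _⟩ := hforward hnar
      exact ⟨h1, h2⟩
    · rintro ⟨hpr, hcent⟩
      have hNmax : IsMaxGInv G A N := by
        refine ⟨hNGInv, hgt, ?_⟩
        intro C hC hClt hNC
        have h1 : N.relIndex C * C.relIndex A = N.relIndex A :=
          Subgroup.relIndex_mul_relIndex N C A hNC hClt.le
        have h2 : C.relIndex A ≠ 1 := by
          rw [ne_eq, Subgroup.relIndex_eq_one]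
          exact hClt.not_ge
        have h3 : C.relIndex A ∣ N.relIndex A := Dvd.intro_left _ h1
        rcases hpr.eq_one_or_self_of_dvd _ h3 with h | h
        · exact absurd h h2
        · have h4 : N.relIndex C = 1 := by
            have h5 : N.relIndex C * N.relIndex A = 1 * N.relIndex A := by
              rw [one_mul]
              calc N.relIndex C * N.relIndex A = N.relIndex C * C.relIndex A := by rw [h]
                _ = N.relIndex A := h1
            exact Nat.eq_of_mul_eq_mul_right hpr.pos h5
          exact le_antisymm hNC (Subgroup.relIndex_eq_one.1 h4)
      refine ⟨N, hNmax, ?_⟩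
      intro B hB
      have hBn : B.Normal := ⟨fun b hb g => hB.1.2 g b hb⟩
      have hBA : B < A := hB.2.1
      have hchief : ∀ M : Subgroup G, M.Normal → B < M → M < A → False := by
        intro M hM h1 h2
        exact h1.ne (hB.2.2 M ⟨h2.le, fun g b hb => hM.conj_mem b hb g⟩ h2 h1.le)
      have hcommB : ⁅A, (⊤ : Subgroup G)⁆ ≤ B :=
        Subgroup.commutator_le.2 (fun a ha g _ => hcent B hBn hBA hchief a ha g)
      have hMelB : Mel G A ≤ B := sInf_le (hmaxnIn B hB hcommB)
      have hNB : N ≤ B := sup_le hMelB hcommB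
      have h1 : N.relIndex B * B.relIndex A = N.relIndex A :=
        Subgroup.relIndex_mul_relIndex N B A hNB hBA.le
      have h2 : B.relIndex A ≠ 1 := by
        rw [ne_eq, Subgroup.relIndex_eq_one]
        exact hBA.not_ge
      have h3 : B.relIndex A ∣ N.relIndex A := Dvd.intro_left _ h1
      rcases hpr.eq_one_or_self_of_dvd _ h3 with h | h
      · exact absurd h h2
      · have h4 : N.relIndex B = 1 := by
          have h5 : N.relIndex B * N.relIndex A = 1 * N.relIndex A := by
            rw [one_mul]
            calc N.relIndex B * N.relIndex A = N.relIndex B * B.relIndex A := by rw [h]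
              _ = N.relIndex A := h1
          exact Nat.eq_of_mul_eq_mul_right hpr.pos h5
        exact le_antisymm (Subgroup.relIndex_eq_one.1 h4) hNB
  · intro hnar
    exact (hforward hnar).2.2
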